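/- Let X₀ be an n×d real matrix and (A; B) a full-rank (n+d)×d matrix with s := ‖sin∠(col((A;B)), col((X₀;−I)))‖ < 1/√(1+‖X₀‖²). Then B is nonsingular and ‖A B⁻¹ + X₀‖ ≤ (1+‖X₀‖²)(‖X₀‖s² + s√(1−s²)) / (1 − (1+‖X₀‖²)s²). -/

import Mathlib

noncomputable section
open Matrix

/-- Spectral (operator 2-) norm of a real matrix. -/
noncomputable def specNorm {m n : ℕ} (M : Matrix (Fin m) (Fin n) ℝ) : ℝ :=
  ‖LinearMap.toContinuousLinearMap (Matrix.toEuclideanLin M)‖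

/-- Orthogonal projector onto a subspace, as a continuous linear map on the whole space. -/
noncomputable def projCLM {ι : Type*} [Fintype ι] (W : Submodule ℝ (EuclideanSpace ℝ ι)) :
    EuclideanSpace ℝ ι →L[ℝ] EuclideanSpace ℝ ι :=
  W.subtypeL.comp (W.orthogonalProjection)

/-- ‖sin∠(V,W)‖ = ‖P_V (I − P_W)‖, the largest sine of canonical angles. -/
noncomputable def sinAngle {ι : Type*} [Fintype ι]
    (V W : Submodule ℝ (EuclideanSpace ℝ ι)) : ℝ :=
  ‖(projCLM V).comp (ContinuousLinearMap.id ℝ (EuclideanSpace ℝ ι) - projCLM W)‖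

/-- Column space of a matrix, as a subspace of Euclidean space. -/
noncomputable def colSpaceE {ι κ : Type*} [Fintype ι] [Fintype κ] [DecidableEq κ]
    (M : Matrix ι κ ℝ) : Submodule ℝ (EuclideanSpace ℝ ι) :=
  LinearMap.range (Matrix.toEuclideanLin M)

/-! ### Auxiliary lemmas -/

/-- The vector in `EuclideanSpace ℝ (Fin n ⊕ Fin d)` with blocks `u` and `x`. -/
noncomputable def pr {n d : ℕ} (u : EuclideanSpace ℝ (Fin n)) (x : EuclideanSpace ℝ (Fin d)) :
    EuclideanSpace ℝ (Fin n ⊕ Fin d) :=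
  (WithLp.equiv 2 _).symm (Sum.elim ((WithLp.equiv 2 _) u) ((WithLp.equiv 2 _) x))

lemma norm_pr_sq {n d : ℕ} (u : EuclideanSpace ℝ (Fin n)) (x : EuclideanSpace ℝ (Fin d)) :
    ‖pr u x‖ ^ 2 = ‖u‖ ^ 2 + ‖x‖ ^ 2 := by
  simp only [EuclideanSpace.norm_eq]
  rw [Real.sq_sqrt (by positivity), Real.sq_sqrt (by positivity), Real.sq_sqrt (by positivity),
    Fintype.sum_sum_type]
  simp [pr]

lemma pr_sub {n d : ℕ} (u u' : EuclideanSpace ℝ (Fin n)) (x x' : EuclideanSpace ℝ (Fin d)) :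
    pr u x - pr u' x' = pr (u - u') (x - x') := by
  ext i
  cases i <;> simp [pr]

lemma toEuclideanLin_fromRows {n d k : ℕ} (M : Matrix (Fin n) (Fin k) ℝ)
    (N : Matrix (Fin d) (Fin k) ℝ) (x : EuclideanSpace ℝ (Fin k)) :
    Matrix.toEuclideanLin (Matrix.fromRows M N) x =
      pr (Matrix.toEuclideanLin M x) (Matrix.toEuclideanLin N x) := by
  ext i
  cases i <;> simp [pr, Matrix.toEuclideanLin_apply]

lemma toEuclideanLin_mul' {l m k : ℕ} (M : Matrix (Fin l) (Fin m) ℝ) (N : Matrix (Fin m) (Fin k) ℝ)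
    (z : EuclideanSpace ℝ (Fin k)) :
    Matrix.toEuclideanLin (M * N) z = Matrix.toEuclideanLin M (Matrix.toEuclideanLin N z) := by
  simp [Matrix.toEuclideanLin_apply, Matrix.mulVec_mulVec]

lemma toEuclideanLin_one' {k : ℕ} (z : EuclideanSpace ℝ (Fin k)) :
    Matrix.toEuclideanLin (1 : Matrix (Fin k) (Fin k) ℝ) z = z := by
  simp [Matrix.toEuclideanLin_apply]

lemma toEuclideanLin_negone {k : ℕ} (z : EuclideanSpace ℝ (Fin k)) :
    Matrix.toEuclideanLin (-1 : Matrix (Fin k) (Fin k) ℝ) z = -z := by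
  rw [map_neg]
  simp only [LinearMap.neg_apply]
  rw [toEuclideanLin_one']

lemma le_specNorm {m n : ℕ} (M : Matrix (Fin m) (Fin n) ℝ) (x : EuclideanSpace ℝ (Fin n)) :
    ‖Matrix.toEuclideanLin M x‖ ≤ specNorm M * ‖x‖ := by
  exact (LinearMap.toContinuousLinearMap (Matrix.toEuclideanLin M)).le_opNorm x

lemma specNorm_le {m n : ℕ} (M : Matrix (Fin m) (Fin n) ℝ) (c : ℝ) (hc : 0 ≤ c)
    (h : ∀ x : EuclideanSpace ℝ (Fin n), ‖Matrix.toEuclideanLin M x‖ ≤ c * ‖x‖) :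
    specNorm M ≤ c :=
  ContinuousLinearMap.opNorm_le_bound _ hc (by simpa using h)

/-- For `v ∈ V`, `‖(I - P_W) v‖ ≤ sin∠(V,W) ‖v‖` (via the adjoint). -/
lemma sub_proj_le {ι : Type*} [Fintype ι] (V W : Submodule ℝ (EuclideanSpace ℝ ι))
    (v : EuclideanSpace ℝ ι) (hv : v ∈ V) :
    ‖v - projCLM W v‖ ≤ sinAngle V W * ‖v‖ := by
  have hVv : projCLM V v = v := by
    exact Submodule.starProjection_eq_self_iff.mpr hv
  set T := (projCLM V).comp (ContinuousLinearMap.id ℝ (EuclideanSpace ℝ ι) - projCLM W) with hT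
  have hP : ∀ U : Submodule ℝ (EuclideanSpace ℝ ι),
      ContinuousLinearMap.adjoint (projCLM U) = projCLM U := fun U =>
    (isSelfAdjoint_starProjection U).adjoint_eq
  have hW : ContinuousLinearMap.adjoint (ContinuousLinearMap.id ℝ (EuclideanSpace ℝ ι) - projCLM W)
      = ContinuousLinearMap.id ℝ (EuclideanSpace ℝ ι) - projCLM W := by
    rw [map_sub, ContinuousLinearMap.adjoint_id, hP]
  have hadj : ContinuousLinearMap.adjoint T =
      (ContinuousLinearMap.id ℝ (EuclideanSpace ℝ ι) - projCLM W).comp (projCLM V) := by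
    rw [hT, ContinuousLinearMap.adjoint_comp, hP, hW]
  have key : v - projCLM W v = ContinuousLinearMap.adjoint T v := by
    rw [hadj]
    simp [ContinuousLinearMap.comp_apply, hVv]
  rw [key, sinAngle]
  calc ‖ContinuousLinearMap.adjoint T v‖ ≤ ‖ContinuousLinearMap.adjoint T‖ * ‖v‖ :=
        (ContinuousLinearMap.adjoint T).le_opNorm v
    _ = ‖T‖ * ‖v‖ := by rw [ContinuousLinearMap.adjoint.norm_map]

/-- Distance from `(u; x)` to any element of `col (X₀; -I)` is at least
`‖u + X₀ x‖ / √(1+‖X₀‖²)`. -/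
lemma dist_lower {n d : ℕ} (X₀ : Matrix (Fin n) (Fin d) ℝ)
    (u : EuclideanSpace ℝ (Fin n)) (x : EuclideanSpace ℝ (Fin d))
    (w : EuclideanSpace ℝ (Fin n ⊕ Fin d))
    (hw : w ∈ colSpaceE (Matrix.fromRows X₀ (-1 : Matrix (Fin d) (Fin d) ℝ))) :
    ‖u + Matrix.toEuclideanLin X₀ x‖ ≤
      Real.sqrt (1 + specNorm X₀ ^ 2) * ‖pr u x - w‖ := by
  obtain ⟨y, hy⟩ := hw
  set a := specNorm X₀ with hadef
  have ha : 0 ≤ a := norm_nonneg _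
  have hwp : w = pr (Matrix.toEuclideanLin X₀ y) (-y) := by
    rw [← hy, toEuclideanLin_fromRows, toEuclideanLin_negone]
  set u' := Matrix.toEuclideanLin X₀ y with hu'
  have hdiff : pr u x - w = pr (u - u') (x + y) := by
    rw [hwp, pr_sub, sub_neg_eq_add]
  set p := ‖u - u'‖ with hp
  set t := ‖x + y‖ with ht
  have hDsq : ‖pr u x - w‖^2 = p^2 + t^2 := by rw [hdiff, norm_pr_sq]
  have hD : 0 ≤ ‖pr u x - w‖ := norm_nonneg _
  have hXe : ‖Matrix.toEuclideanLin X₀ (x + y)‖ ≤ a * t := le_specNorm X₀ (x + y)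
  have hc : ‖u + Matrix.toEuclideanLin X₀ x‖ ≤ p + a * t := by
    have hid : u + Matrix.toEuclideanLin X₀ x = (u - u') + Matrix.toEuclideanLin X₀ (x + y) := by
      rw [map_add]; rw [hu']; abel
    calc ‖u + Matrix.toEuclideanLin X₀ x‖
        ≤ ‖u - u'‖ + ‖Matrix.toEuclideanLin X₀ (x + y)‖ := by rw [hid]; exact norm_add_le _ _
      _ ≤ p + a * t := by rw [← hp]; linarith
  have hp0 : 0 ≤ p := norm_nonneg _
  have ht0 : 0 ≤ t := norm_nonneg _
  have hsq : (p + a*t)^2 ≤ (Real.sqrt (1 + a^2) * ‖pr u x - w‖)^2 := by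
    rw [mul_pow, Real.sq_sqrt (by positivity), hDsq]
    nlinarith [sq_nonneg (a*p - t)]
  have hrhs : 0 ≤ Real.sqrt (1 + a^2) * ‖pr u x - w‖ := by positivity
  nlinarith [hc, hsq, hrhs, norm_nonneg (u + Matrix.toEuclideanLin X₀ x)]

lemma rank_inj {n d : ℕ} (C : Matrix (Fin n ⊕ Fin d) (Fin d) ℝ) (hrank : C.rank = d)
    (x : Fin d → ℝ) (hx : C *ᵥ x = 0) : x = 0 := by
  have hrank' : Module.finrank ℝ (LinearMap.range C.mulVecLin) = d := hrank
  have h1 := LinearMap.finrank_range_add_finrank_ker C.mulVecLin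
  have h2 : Module.finrank ℝ (Fin d → ℝ) = d := by simp
  rw [h2, hrank'] at h1
  have h3 : Module.finrank ℝ (LinearMap.ker C.mulVecLin) = 0 := by omega
  have hker : LinearMap.ker C.mulVecLin = ⊥ := Submodule.finrank_eq_zero.mp h3
  have : x ∈ LinearMap.ker C.mulVecLin := by simpa using hx
  simpa [hker] using this

lemma final_scalar (a s c r g : ℝ) (ha : 0 ≤ a) (hs0 : 0 ≤ s) (hc : 0 ≤ c) (hr : 0 ≤ r)
    (hg : 0 ≤ g) (hg2 : g^2 = 1 - s^2) (hτ : (1+a^2)*s^2 < 1)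
    (h : c^2 ≤ (1+a^2)*s^2*((c+a*r)^2 + r^2)) :
    c ≤ (1+a^2)*(a*s^2 + s*g)/(1-(1+a^2)*s^2)*r := by
  have hden : 0 < 1 - (1+a^2)*s^2 := by linarith
  rw [div_mul_eq_mul_div, le_div_iff₀ hden]
  have hq2 : ((1+a^2)*s*g*r)^2 = ((1+a^2)*s^2)*((1+a^2)-(1+a^2)*s^2)*r^2 := by
    linear_combination ((1+a^2)^2*s^2*r^2) * hg2
  have hp2 : ((1-(1+a^2)*s^2)*c - (1+a^2)*s^2*a*r)^2 ≤ ((1+a^2)*s*g*r)^2 := by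
    rw [hq2]
    nlinarith [mul_nonneg hden.le (sub_nonneg.mpr h)]
  have hq : 0 ≤ (1+a^2)*s*g*r := by positivity
  nlinarith [hp2, hq, sq_nonneg ((1-(1+a^2)*s^2)*c - (1+a^2)*s^2*a*r + (1+a^2)*s*g*r)]

set_option maxHeartbeats 1000000 in
/-- If s = ‖sin∠(col(A;B), col(X₀;−I))‖ < 1/√(1+‖X₀‖²) then B is nonsingular and
‖AB⁻¹ + X₀‖ ≤ (1+‖X₀‖²)(‖X₀‖s² + s√(1−s²)) / (1 − (1+‖X₀‖²)s²). -/
theorem sin_angle_distance_bound {n d : ℕ}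
    (X₀ A : Matrix (Fin n) (Fin d) ℝ) (B : Matrix (Fin d) (Fin d) ℝ)
    (hrank : (Matrix.fromRows A B).rank = d)
    (s : ℝ)
    (hs : s = sinAngle (colSpaceE (Matrix.fromRows A B))
        (colSpaceE (Matrix.fromRows X₀ (-1 : Matrix (Fin d) (Fin d) ℝ))))
    (hsin : s < 1 / Real.sqrt (1 + specNorm X₀ ^ 2)) :
    IsUnit B.det ∧
      specNorm (A * B⁻¹ + X₀) ≤
        (1 + specNorm X₀ ^ 2) * (specNorm X₀ * s ^ 2 + s * Real.sqrt (1 - s ^ 2)) /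
          (1 - (1 + specNorm X₀ ^ 2) * s ^ 2) := by
  classical
  set a := specNorm X₀ with hadef
  have ha : 0 ≤ a := norm_nonneg _
  set C := Matrix.fromRows A B with hC
  set Z := Matrix.fromRows X₀ (-1 : Matrix (Fin d) (Fin d) ℝ) with hZ
  set V := colSpaceE C with hV
  set W := colSpaceE Z with hW
  have hs0 : 0 ≤ s := hs ▸ norm_nonneg _
  have hsqrtpos : (0:ℝ) < Real.sqrt (1 + a^2) := Real.sqrt_pos.2 (by positivity)
  have hssqrt : s * Real.sqrt (1 + a^2) < 1 := by
    rw [lt_div_iff₀ hsqrtpos] at hsin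
    exact hsin
  have hsq_sqrt : (Real.sqrt (1 + a^2))^2 = 1 + a^2 := Real.sq_sqrt (by positivity)
  have hτ : (1 + a^2) * s^2 < 1 := by
    have h4 : (s * Real.sqrt (1 + a^2)) * (s * Real.sqrt (1 + a^2)) < 1 := by
      nlinarith [mul_nonneg hs0 hsqrtpos.le]
    nlinarith [h4, hsq_sqrt]
  have hs1 : s^2 < 1 := by nlinarith
  -- the key estimate, for any vector of V written in block form
  have key : ∀ (u : EuclideanSpace ℝ (Fin n)) (x : EuclideanSpace ℝ (Fin d)),
      pr u x ∈ V →
      ‖u + Matrix.toEuclideanLin X₀ x‖ ≤ Real.sqrt (1 + a^2) * (s * ‖pr u x‖) := by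
    intro u x hvV
    have hwW : projCLM W (pr u x) ∈ W := Submodule.coe_mem (W.orthogonalProjection (pr u x))
    have h2 := dist_lower X₀ u x (projCLM W (pr u x)) hwW
    have h1 : ‖pr u x - projCLM W (pr u x)‖ ≤ s * ‖pr u x‖ := by
      rw [hs]
      exact sub_proj_le V W (pr u x) hvV
    calc ‖u + Matrix.toEuclideanLin X₀ x‖
        ≤ Real.sqrt (1 + a^2) * ‖pr u x - projCLM W (pr u x)‖ := h2
      _ ≤ Real.sqrt (1 + a^2) * (s * ‖pr u x‖) := by
          exact mul_le_mul_of_nonneg_left h1 hsqrtpos.le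
  -- B is nonsingular
  have hdet : IsUnit B.det := by
    rw [isUnit_iff_ne_zero]
    intro h0
    obtain ⟨x, hx0, hBx⟩ := Matrix.exists_mulVec_eq_zero_iff.mpr h0
    set xE : EuclideanSpace ℝ (Fin d) := (WithLp.equiv 2 (Fin d → ℝ)).symm x with hxE
    have hBxE : Matrix.toEuclideanLin B xE = 0 := by
      rw [hxE, WithLp.equiv_symm_apply, Matrix.toEuclideanLin_apply_piLp_toLp, hBx]
      rfl
    set u := Matrix.toEuclideanLin A xE with hu
    have hvV : pr u (0 : EuclideanSpace ℝ (Fin d)) ∈ V := by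
      refine ⟨xE, ?_⟩
      rw [toEuclideanLin_fromRows, hBxE, hu]
    have hk := key u 0 hvV
    have hnv : ‖pr u (0 : EuclideanSpace ℝ (Fin d))‖ = ‖u‖ := by
      have h : ‖pr u (0 : EuclideanSpace ℝ (Fin d))‖^2 = ‖u‖^2 := by
        rw [norm_pr_sq]; simp
      have h2 := congrArg Real.sqrt h
      rwa [Real.sqrt_sq (norm_nonneg _), Real.sqrt_sq (norm_nonneg _)] at h2
    rw [map_zero, add_zero, hnv] at hk
    -- u ≠ 0
    have hu0 : u ≠ 0 := by
      intro h
      apply hx0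
      have hCx : C *ᵥ x = 0 := by
        have : Matrix.toEuclideanLin C xE = 0 := by
          rw [toEuclideanLin_fromRows, hBxE, ← hu, h]
          ext i
          cases i <;> simp [pr]
        rw [hxE, WithLp.equiv_symm_apply, Matrix.toEuclideanLin_apply_piLp_toLp] at this
        have := congrArg (⇑(WithLp.equiv 2 (Fin n ⊕ Fin d → ℝ))) this
        simpa using this
      exact rank_inj C hrank x hCx
    have hupos : 0 < ‖u‖ := norm_pos_iff.mpr hu0
    set nu := ‖u‖ with hnu
    clear_value nu
    have hmul := mul_lt_mul_of_pos_right hssqrt hupos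
    rw [one_mul] at hmul
    nlinarith [hk, hmul]
  refine ⟨hdet, ?_⟩
  -- the norm bound
  have hden : 0 < 1 - (1 + a^2) * s^2 := by linarith
  have hg : 0 ≤ Real.sqrt (1 - s^2) := Real.sqrt_nonneg _
  have hg2 : (Real.sqrt (1 - s^2))^2 = 1 - s^2 := Real.sq_sqrt (by linarith)
  have hKnn : 0 ≤ (1 + a^2) * (a * s^2 + s * Real.sqrt (1 - s^2)) /
      (1 - (1 + a^2) * s^2) := by positivity
  refine specNorm_le _ _ hKnn ?_
  intro z
  set x := Matrix.toEuclideanLin B⁻¹ z with hx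
  have hBx : Matrix.toEuclideanLin B x = z := by
    rw [hx, ← toEuclideanLin_mul', Matrix.mul_nonsing_inv B hdet, toEuclideanLin_one']
  set u := Matrix.toEuclideanLin A x with hu
  have hval : Matrix.toEuclideanLin (A * B⁻¹ + X₀) z = u + Matrix.toEuclideanLin X₀ z := by
    rw [map_add, LinearMap.add_apply, toEuclideanLin_mul', hu, hx]
  have hvV : pr u z ∈ V := by
    refine ⟨x, ?_⟩
    rw [toEuclideanLin_fromRows, hBx, hu]
  have hk := key u z hvV
  rw [hval]
  set c := ‖u + Matrix.toEuclideanLin X₀ z‖ with hc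
  set r := ‖z‖ with hr
  have hc0 : 0 ≤ c := norm_nonneg _
  have hr0 : 0 ≤ r := norm_nonneg _
  have hub : ‖u‖ ≤ c + a * r := by
    have hXz : ‖Matrix.toEuclideanLin X₀ z‖ ≤ a * r := le_specNorm X₀ z
    calc ‖u‖ = ‖(u + Matrix.toEuclideanLin X₀ z) - Matrix.toEuclideanLin X₀ z‖ := by
          congr 1; abel
      _ ≤ ‖u + Matrix.toEuclideanLin X₀ z‖ + ‖Matrix.toEuclideanLin X₀ z‖ := norm_sub_le _ _
      _ ≤ c + a * r := by rw [← hc]; linarith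
  have hvsq : ‖pr u z‖^2 = ‖u‖^2 + r^2 := norm_pr_sq u z
  set np := ‖pr u z‖ with hnp
  set nu := ‖u‖ with hnuu
  have hnp0 : 0 ≤ np := norm_nonneg _
  have hnu0 : 0 ≤ nu := norm_nonneg _
  clear_value np nu
  have hcsq : c^2 ≤ (1 + a^2) * s^2 * ((c + a*r)^2 + r^2) := by
    have h1 : c^2 ≤ (1 + a^2) * s^2 * np^2 := by
      have := pow_le_pow_left₀ hc0 hk 2
      calc c^2 ≤ (Real.sqrt (1 + a^2) * (s * np))^2 := this
        _ = (1 + a^2) * s^2 * np^2 := by rw [mul_pow, mul_pow, hsq_sqrt]; ring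
    have h2 : nu^2 ≤ (c + a*r)^2 := pow_le_pow_left₀ hnu0 hub 2
    have h3 : np^2 ≤ (c + a*r)^2 + r^2 := by rw [hvsq]; linarith
    calc c^2 ≤ (1 + a^2) * s^2 * np^2 := h1
      _ ≤ (1 + a^2) * s^2 * ((c + a*r)^2 + r^2) :=
          mul_le_mul_of_nonneg_left h3 (by positivity)
  exact final_scalar a s c r (Real.sqrt (1 - s^2)) ha hs0 hc0 hr0 hg hg2 hτ hcsq
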